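/- Let n ≡ 1 (mod 4) be a positive integer, let G be an abelian group of order n, and let D ⊆ G \ {0} be a subset with (n-1)/2 elements such that (D, -D) is a partition of G \ {0}. Then the Cayley digraph Cay(G, D) is nearly-doubly-regular if and only if D is an (n, (n-1)/2, (n-5)/4)-almost difference set of G. -/

import Mathlib

open scoped Classical

/-- The set of out-neighbors of `v` in the digraph with adjacency relation `r`. -/
noncomputable def outNbrs {V : Type*} [Fintype V] (r : V → V → Prop) (v : V) : Finset V :=
  Finset.univ.filter (fun w => r v w)

/-- The set of in-neighbors of `v` in the digraph with adjacency relation `r`. -/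
noncomputable def inNbrs {V : Type*} [Fintype V] (r : V → V → Prop) (v : V) : Finset V :=
  Finset.univ.filter (fun w => r w v)

/-- A tournament: a loopless digraph where for every pair of distinct vertices
exactly one of the two arcs is present. -/
def IsTournament {V : Type*} [Fintype V] (r : V → V → Prop) : Prop :=
  (∀ v, ¬ r v v) ∧ ∀ u v : V, u ≠ v → (r u v ↔ ¬ r v u)

/-- A regular tournament: `n` is odd and every out-degree equals `(n-1)/2`. -/
def IsRegularTournament {V : Type*} [Fintype V] (r : V → V → Prop) : Prop :=
  IsTournament r ∧ Odd (Fintype.card V) ∧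
    ∀ v : V, (outNbrs r v).card = (Fintype.card V - 1) / 2

/-- The subtournament induced on the (even-sized) vertex set `s` is near-regular:
every vertex of `s` has out-degree `s.card / 2` or `s.card / 2 - 1` within `s`. -/
def NearRegularOn {V : Type*} [Fintype V] (r : V → V → Prop) (s : Finset V) : Prop :=
  Even s.card ∧ ∀ v ∈ s,
    (s.filter (fun w => r v w)).card = s.card / 2 ∨
    (s.filter (fun w => r v w)).card = s.card / 2 - 1

/-- A nearly-doubly-regular tournament (`NDR_n`). -/
def IsNDR {V : Type*} [Fintype V] (r : V → V → Prop) : Prop :=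
  Fintype.card V % 4 = 1 ∧ IsRegularTournament r ∧
    ∀ v : V, NearRegularOn r (outNbrs r v) ∧ NearRegularOn r (inNbrs r v)

/-- The number of solutions `(x, y) ∈ D × D` of the equation `x - y = a`. -/
noncomputable def diffCount {G : Type*} [AddCommGroup G] (D : Finset G) (a : G) : ℕ :=
  ((D ×ˢ D).filter (fun p => p.1 - p.2 = a)).card

/-- An `(n, k, λ)`-almost difference set of an abelian group `G` of odd order `n`:
a `k`-element subset `D ⊆ G \ {0}` such that for exactly `(n-1)/2` nonzero `a ∈ G`
the equation `x - y = a` has exactly `λ` solutions in `D × D`, and for the other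
nonzero elements it has exactly `λ + 1` solutions. -/
def IsAlmostDiffSet {G : Type*} [AddCommGroup G] [Fintype G]
    (n k lam : ℕ) (D : Finset G) : Prop :=
  Fintype.card G = n ∧ (0 : G) ∉ D ∧ D.card = k ∧
  (Finset.univ.filter (fun a : G => a ≠ 0 ∧ diffCount D a = lam)).card = (n - 1) / 2 ∧
  ∀ a : G, a ≠ 0 → diffCount D a = lam ∨ diffCount D a = lam + 1

section Helpers
set_option linter.unusedSectionVars false
variable {G : Type} [AddCommGroup G] [Fintype G]

lemma diffCount_eq (D : Finset G) (a : G) :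
    diffCount D a = (D.filter (fun y => a + y ∈ D)).card := by
  unfold diffCount
  apply Finset.card_nbij' (fun p => p.2) (fun y => (a + y, y))
  · rintro ⟨x, y⟩ hp
    simp only [Finset.mem_coe, Finset.mem_filter, Finset.mem_product] at hp ⊢
    obtain ⟨⟨h1, h2⟩, h3⟩ := hp
    have hx : x = a + y := by rw [← h3]; abel
    exact ⟨h2, hx ▸ h1⟩
  · intro y hy
    simp only [Finset.mem_coe, Finset.mem_filter, Finset.mem_product] at hy ⊢
    exact ⟨⟨hy.2, hy.1⟩, by abel⟩
  · rintro ⟨x, y⟩ hp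
    simp only [Finset.mem_coe, Finset.mem_filter, Finset.mem_product] at hp
    have hx : x = a + y := by rw [← hp.2]; abel
    simp [hx]
  · intro y _; rfl

lemma diffCount_neg (D : Finset G) (a : G) : diffCount D (-a) = diffCount D a := by
  unfold diffCount
  apply Finset.card_nbij' (fun p => (p.2, p.1)) (fun p => (p.2, p.1))
  · rintro ⟨x, y⟩ hp
    simp only [Finset.mem_coe, Finset.mem_filter, Finset.mem_product] at hp ⊢
    exact ⟨⟨hp.1.2, hp.1.1⟩, by rw [← neg_sub, hp.2, neg_neg]⟩
  · rintro ⟨x, y⟩ hp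
    simp only [Finset.mem_coe, Finset.mem_filter, Finset.mem_product] at hp ⊢
    exact ⟨⟨hp.1.2, hp.1.1⟩, by rw [← neg_sub, hp.2]⟩
  · rintro ⟨x, y⟩ _; rfl
  · rintro ⟨x, y⟩ _; rfl

lemma diffCount_zero (D : Finset G) : diffCount D 0 = D.card := by
  unfold diffCount
  symm
  apply Finset.card_nbij' (fun x => (x, x)) (fun p => p.1)
  · intro x hx; simp [Finset.mem_coe.mp hx]
  · rintro ⟨x, y⟩ hp
    simp only [Finset.mem_coe, Finset.mem_filter, Finset.mem_product] at hp
    exact hp.1.1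
  · intro x _; rfl
  · rintro ⟨x, y⟩ hp
    simp only [Finset.mem_coe, Finset.mem_filter, Finset.mem_product] at hp
    have hxy : x = y := sub_eq_zero.mp hp.2
    simp [hxy]

lemma sum_diffCount (D : Finset G) : ∑ a : G, diffCount D a = D.card * D.card := by
  unfold diffCount
  rw [← Finset.card_product]
  exact (Finset.card_eq_sum_card_fiberwise
    (fun (x : G × G) (_ : x ∈ D ×ˢ D) => Finset.mem_univ (x.1 - x.2))).symm

lemma card_filter_sub (D : Finset G) (v : G) :
    ((Finset.univ : Finset G).filter (fun w => v - w ∈ D)).card = D.card := by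
  apply Finset.card_nbij' (fun w => v - w) (fun d => v - d)
  · intro w hw; exact (Finset.mem_filter.mp hw).2
  · intro d hd; simp [Finset.mem_filter, sub_sub_cancel, Finset.mem_coe.mp hd]
  · intro w _; exact sub_sub_cancel v w
  · intro d _; exact sub_sub_cancel v d

lemma key_split (D : Finset G) (hD0 : (0:G) ∉ D)
    (hpart : ∀ x : G, x ≠ 0 → (x ∈ D ↔ -x ∉ D)) (v : G) :
    (D.filter (fun w => v - w ∈ D)).card + diffCount D v
      + (if v ∈ D then 1 else 0) = D.card := by
  have hcompl : Finset.univ \ D = insert (0:G) (D.image (fun x => -x)) := by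
    ext u
    simp only [Finset.mem_sdiff, Finset.mem_univ, true_and, Finset.mem_insert,
      Finset.mem_image]
    constructor
    · intro hu
      by_cases h0 : u = 0
      · exact Or.inl h0
      · right
        have h := hpart (-u) (by simpa using h0)
        rw [neg_neg] at h
        exact ⟨-u, h.mpr hu, neg_neg u⟩
    · rintro (rfl | ⟨x, hx, rfl⟩)
      · exact hD0
      · intro hnx
        have hx0 : x ≠ 0 := fun h => hD0 (h ▸ hx)
        exact (hpart x hx0).mp hx hnx
  have h0notim : (0:G) ∉ D.image (fun x => -x) := by
    simp only [Finset.mem_image, not_exists, not_and]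
    intro x hx h
    exact hD0 (neg_eq_zero.mp h ▸ hx)
  have h1 : ((Finset.univ : Finset G).filter (fun w => v - w ∈ D)).card
      = (D.filter (fun w => v - w ∈ D)).card
        + ((Finset.univ \ D).filter (fun w => v - w ∈ D)).card := by
    rw [← Finset.card_union_of_disjoint
      (Finset.disjoint_filter_filter Finset.disjoint_sdiff),
      ← Finset.filter_union, Finset.union_sdiff_of_subset (Finset.subset_univ D)]
  have h3 : ((D.image fun x => -x).filter (fun w => v - w ∈ D)).card
      = diffCount D v := by
    rw [Finset.filter_image, Finset.card_image_of_injective _ neg_injective,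
      diffCount_eq]
    congr 1
    ext y
    simp [sub_neg_eq_add]
  have h2 : ((Finset.univ \ D).filter (fun w => v - w ∈ D)).card
      = (if v ∈ D then 1 else 0) + diffCount D v := by
    rw [hcompl, Finset.filter_insert]
    by_cases hv : v ∈ D
    · rw [if_pos (by simpa using hv), if_pos hv,
        Finset.card_insert_of_notMem (fun h => h0notim (Finset.mem_of_mem_filter _ h)), h3]
      omega
    · rw [if_neg (by simpa using hv), if_neg hv, h3]
      omega
  rw [← card_filter_sub D v, h1, h2]
  omega

lemma tourn_split (D : Finset G) (hD0 : (0:G) ∉ D)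
    (hpart : ∀ x : G, x ≠ 0 → (x ∈ D ↔ -x ∉ D)) (v : G) (hv : v ∈ D) :
    (D.filter (fun w => w - v ∈ D)).card + (D.filter (fun w => v - w ∈ D)).card + 1
      = D.card := by
  have hne : ∀ w : G, w ∈ D → w ≠ v → ((v - w ∈ D) ↔ ¬ (w - v ∈ D)) := by
    intro w _ hwv
    have h := hpart (v - w) (sub_ne_zero.mpr (Ne.symm hwv))
    rw [neg_sub] at h
    exact h
  have heq : D.filter (fun w => ¬ (v - w ∈ D)) = insert v (D.filter (fun w => w - v ∈ D)) := by
    ext w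
    simp only [Finset.mem_filter, Finset.mem_insert]
    constructor
    · rintro ⟨hw, hnw⟩
      by_cases hwv : w = v
      · exact Or.inl hwv
      · exact Or.inr ⟨hw, by by_contra h; exact hnw ((hne w hw hwv).mpr h)⟩
    · rintro (rfl | ⟨hw, hwD⟩)
      · exact ⟨hv, by simpa [sub_self] using hD0⟩
      · refine ⟨hw, fun hvw => ?_⟩
        have hwv : w ≠ v := by
          rintro rfl
          exact hD0 (by simpa [sub_self] using hwD)
        exact ((hne w hw hwv).mp hvw) hwD
  have hnot : v ∉ D.filter (fun w => w - v ∈ D) := by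
    simp only [Finset.mem_filter, sub_self]
    exact fun h => hD0 h.2
  have htot := Finset.card_filter_add_card_filter_not
    (s := D) (p := fun w => v - w ∈ D)
  rw [heq, Finset.card_insert_of_notMem hnot] at htot
  omega

lemma inNbrs_card (D : Finset G) (g : G) :
    (inNbrs (fun x y : G => x - y ∈ D) g).card = D.card := by
  apply Finset.card_nbij' (fun w => w - g) (fun d => d + g)
  · intro w hw
    simpa [inNbrs] using hw
  · intro d hd
    simp [inNbrs, Finset.mem_coe.mp hd]
  · intro w _; exact sub_add_cancel w g
  · intro d _; exact add_sub_cancel_right d g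

lemma outNbrs_card (D : Finset G) (g : G) :
    (outNbrs (fun x y : G => x - y ∈ D) g).card = D.card := by
  apply Finset.card_nbij' (fun w => g - w) (fun d => g - d)
  · intro w hw
    simpa [outNbrs] using hw
  · intro d hd
    simp [outNbrs, sub_sub_cancel, Finset.mem_coe.mp hd]
  · intro w _; exact sub_sub_cancel g w
  · intro d _; exact sub_sub_cancel g d

lemma inNbrs_filter_card (D : Finset G) (g v : G) :
    ((inNbrs (fun x y : G => x - y ∈ D) g).filter (fun w => v - w ∈ D)).card
      = (D.filter (fun w => (v - g) - w ∈ D)).card := by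
  apply Finset.card_nbij' (fun w => w - g) (fun w => w + g)
  · intro w hw
    simp only [Finset.mem_coe, inNbrs, Finset.mem_filter, Finset.mem_univ, true_and] at hw ⊢
    exact ⟨hw.1, by rw [sub_sub_sub_cancel_right]; exact hw.2⟩
  · intro w hw
    simp only [Finset.mem_coe, inNbrs, Finset.mem_filter, Finset.mem_univ, true_and] at hw ⊢
    refine ⟨by simpa using hw.1, ?_⟩
    have h : v - (w + g) = (v - g) - w := by abel
    rw [h]; exact hw.2
  · intro w _; exact sub_add_cancel w g
  · intro w _; exact add_sub_cancel_right w g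

lemma outNbrs_filter_card (D : Finset G) (g v : G) :
    ((outNbrs (fun x y : G => x - y ∈ D) g).filter (fun w => v - w ∈ D)).card
      = (D.filter (fun w => w - (g - v) ∈ D)).card := by
  apply Finset.card_nbij' (fun w => g - w) (fun w => g - w)
  · intro w hw
    simp only [Finset.mem_coe, outNbrs, Finset.mem_filter, Finset.mem_univ, true_and] at hw ⊢
    refine ⟨hw.1, ?_⟩
    have h : (g - w) - (g - v) = v - w := by abel
    rw [h]; exact hw.2
  · intro w hw
    simp only [Finset.mem_coe, outNbrs, Finset.mem_filter, Finset.mem_univ, true_and] at hw ⊢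
    refine ⟨by rw [sub_sub_cancel]; exact hw.1, ?_⟩
    have h : v - (g - w) = w - (g - v) := by abel
    rw [h]; exact hw.2
  · intro w _; exact sub_sub_cancel g w
  · intro w _; exact sub_sub_cancel g w

end Helpers

set_option maxHeartbeats 1000000 in
theorem cayley_isNDR_iff_almostDiffSet
    (n : ℕ) (hn0 : 0 < n) (hn4 : n % 4 = 1)
    (G : Type) [AddCommGroup G] [Fintype G] (hG : Fintype.card G = n)
    (D : Finset G) (hD0 : (0 : G) ∉ D) (hDcard : D.card = (n - 1) / 2)
    (hpart : ∀ x : G, x ≠ 0 → (x ∈ D ↔ -x ∉ D)) :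
    IsNDR (fun x y : G => x - y ∈ D) ↔
      IsAlmostDiffSet n ((n - 1) / 2) ((n - 5) / 4) D := by
  obtain ⟨m, rfl⟩ : ∃ m, n = 4 * m + 1 := ⟨n / 4, by omega⟩
  by_cases hm : m = 0
  · -- trivial case n = 1
    subst hm
    have hall : ∀ x : G, x = 0 := by
      intro x
      have h1 : Fintype.card G ≤ 1 := by omega
      exact (Fintype.card_le_one_iff.mp h1) x 0
    have hDe : D = ∅ := Finset.card_eq_zero.mp (by omega)
    subst hDe
    apply iff_of_true
    · refine ⟨by rw [hG], ⟨⟨fun v => by simp, fun u v huv =>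
        absurd ((hall u).trans (hall v).symm) huv⟩,
        by rw [hG]; exact odd_one, fun v => by simp [outNbrs, hG]⟩, ?_⟩
      intro v
      constructor
      · exact ⟨by simp [outNbrs], fun w hw => absurd hw (by simp [outNbrs])⟩
      · exact ⟨by simp [inNbrs], fun w hw => absurd hw (by simp [inNbrs])⟩
    · refine ⟨hG, hD0, hDcard, ?_, fun a ha => absurd (hall a) ha⟩
      have he : (Finset.univ.filter
          (fun a : G => a ≠ 0 ∧ diffCount (∅ : Finset G) a = (4*0+1-5)/4)) = ∅ :=
        Finset.filter_eq_empty_iff.mpr (fun {a} _ h => h.1 (hall a))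
      rw [he]
      simp
  · -- main case m ≥ 1
    have hm1 : 1 ≤ m := Nat.one_le_iff_ne_zero.mpr hm
    have hk : D.card = 2 * m := by omega
    have hlam : (4 * m + 1 - 5) / 4 = m - 1 := by omega
    have hk2 : (4 * m + 1 - 1) / 2 = 2 * m := by omega
    have hS : ∀ v ∈ D, (D.filter (fun w => v - w ∈ D)).card + diffCount D v + 1 = 2 * m := by
      intro v hv
      have h := key_split D hD0 hpart v
      rw [if_pos hv, hk] at h
      omega
    have hT : ∀ v ∈ D, (D.filter (fun w => w - v ∈ D)).card
        + (D.filter (fun w => v - w ∈ D)).card + 1 = 2 * m := by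
      intro v hv
      have h := tourn_split D hD0 hpart v hv
      rwa [hk] at h
    constructor
    · rintro ⟨h4, ⟨htour, hodd, hreg⟩, hvert⟩
      have hQD : ∀ a ∈ D, diffCount D a = m - 1 ∨ diffCount D a = m := by
        intro a ha
        obtain ⟨hev, hnr⟩ := (hvert 0).2
        have hmem : a ∈ inNbrs (fun x y : G => x - y ∈ D) 0 := by
          simp only [inNbrs, Finset.mem_filter, Finset.mem_univ, true_and]
          simpa using ha
        have h := hnr a hmem
        rw [Finset.filter_congr_decidable] at h
        rw [Finset.filter_congr_decidable] at h
        rw [inNbrs_filter_card, inNbrs_card, hk] at h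
        simp only [sub_zero] at h
        have hS' := hS a ha
        omega
      have hQ : ∀ a : G, a ≠ 0 → diffCount D a = m - 1 ∨ diffCount D a = m := by
        intro a ha
        by_cases haD : a ∈ D
        · exact hQD a haD
        · have hna : -a ∈ D := by
            have h := hpart a ha
            tauto
          rw [← diffCount_neg D a]
          exact hQD (-a) hna
      refine ⟨hG, hD0, hDcard, ?_, ?_⟩
      · simp only [hlam, hk2]
        set N := Finset.univ.filter (fun a : G => a ≠ 0) with hN
        have hNcard : N.card = 4 * m := by
          have hNe : N = Finset.univ \ {0} := by ext a; simp [hN]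
          rw [hNe, Finset.card_sdiff_of_subset (by simp), Finset.card_univ, hG]
          simp
        have hfa : Finset.univ.filter (fun a : G => a ≠ 0 ∧ diffCount D a = m - 1)
            = N.filter (fun a => diffCount D a = m - 1) := by
          rw [hN, Finset.filter_filter]
        have hsplitsum : ∑ a ∈ N, diffCount D a
            = ∑ a ∈ N.filter (fun a => diffCount D a = m - 1), diffCount D a
              + ∑ a ∈ N.filter (fun a => ¬ diffCount D a = m - 1), diffCount D a :=
          (Finset.sum_filter_add_sum_filter_not N _ _).symm
        have h1 : ∑ a ∈ N.filter (fun a => diffCount D a = m - 1), diffCount D a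
            = (N.filter (fun a => diffCount D a = m - 1)).card * (m - 1) := by
          rw [Finset.sum_congr rfl (fun a ha => (Finset.mem_filter.mp ha).2),
            Finset.sum_const, smul_eq_mul]
        have h2 : ∑ a ∈ N.filter (fun a => ¬ diffCount D a = m - 1), diffCount D a
            = (N.filter (fun a => ¬ diffCount D a = m - 1)).card * m := by
          rw [Finset.sum_congr rfl (fun a ha => ?_), Finset.sum_const, smul_eq_mul]
          have hh := Finset.mem_filter.mp ha
          have ha0 : a ≠ 0 := (Finset.mem_filter.mp hh.1).2
          rcases hQ a ha0 with h | h
          · exact absurd h hh.2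
          · exact h
        have hcards : (N.filter (fun a => diffCount D a = m - 1)).card
            + (N.filter (fun a => ¬ diffCount D a = m - 1)).card = 4 * m := by
          rw [Finset.card_filter_add_card_filter_not, hNcard]
        have hsplit0 : ∑ a ∈ N, diffCount D a + diffCount D 0 = ∑ a : G, diffCount D a := by
          have hNe : Finset.univ.erase (0:G) = N := by ext a; simp [hN]
          rw [← hNe]
          exact Finset.sum_erase_add _ _ (Finset.mem_univ 0)
        have htotal : ∑ a : G, diffCount D a = 2 * m * (2 * m) := by
          rw [sum_diffCount, hk]
        have hdc0 : diffCount D 0 = 2 * m := by rw [diffCount_zero, hk]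
        rw [hfa]
        set a1 := (N.filter (fun a => diffCount D a = m - 1)).card with ha1
        set b1 := (N.filter (fun a => ¬ diffCount D a = m - 1)).card with hb1
        have e1 : a1 * (m - 1) + b1 * m + 2 * m = 2 * m * (2 * m) := by
          have h := hsplit0
          rw [htotal, hdc0, hsplitsum, h1, h2] at h
          exact h
        have em : a1 * (m - 1) + a1 = a1 * m := by
          obtain ⟨m', rfl⟩ := Nat.exists_eq_add_of_le hm1
          have hmm : 1 + m' - 1 = m' := by omega
          rw [hmm, Nat.mul_add, Nat.mul_one]
          ring
        have e3 : a1 * (m - 1) + b1 * m + a1 = (a1 + b1) * m := by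
          calc a1 * (m - 1) + b1 * m + a1 = (a1 * (m - 1) + a1) + b1 * m := by ring
            _ = a1 * m + b1 * m := by rw [em]
            _ = (a1 + b1) * m := (Nat.add_mul a1 b1 m).symm
        have e2 : (a1 + b1) * m = 4 * m * m := by rw [hcards]
        have e4 : 2 * m * (2 * m) = 4 * m * m := by ring
        -- conclude a1 = 2 * m
        nlinarith [e1, e2, e3, e4]
      · intro a ha
        rcases hQ a ha with h | h
        · left; rw [h]; omega
        · right; rw [h]; omega
    · rintro ⟨-, -, -, -, hQ'⟩
      have hQ : ∀ a : G, a ≠ 0 → diffCount D a = m - 1 ∨ diffCount D a = m := by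
        intro a ha
        rcases hQ' a ha with h | h
        · left; omega
        · right; omega
      refine ⟨by rw [hG]; omega, ⟨⟨?_, ?_⟩, ?_, ?_⟩, ?_⟩
      · intro v
        simpa [sub_self] using hD0
      · intro u v huv
        have h := hpart (u - v) (sub_ne_zero.mpr huv)
        rwa [neg_sub] at h
      · rw [hG]; exact ⟨2 * m, by ring⟩
      · intro v
        rw [outNbrs_card, hk, hG]
        omega
      · intro g
        constructor
        · constructor
          · rw [outNbrs_card, hk]; exact even_two_mul m
          · intro v hv
            have hv0 : g - v ∈ D := by simpa [outNbrs] using hv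
            rw [Finset.filter_congr_decidable]
            rw [Finset.filter_congr_decidable]
            rw [outNbrs_filter_card, outNbrs_card, hk]
            have h1 := hT (g - v) hv0
            have h2 := hS (g - v) hv0
            have h3 := hQ (g - v) (fun h => hD0 (h ▸ hv0))
            omega
        · constructor
          · rw [inNbrs_card, hk]; exact even_two_mul m
          · intro v hv
            have hv0 : v - g ∈ D := by simpa [inNbrs] using hv
            rw [Finset.filter_congr_decidable]
            rw [Finset.filter_congr_decidable]
            rw [inNbrs_filter_card, inNbrs_card, hk]
            have h1 := hS (v - g) hv0
            have h2 := hQ (v - g) (fun h => hD0 (h ▸ hv0))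
            omega
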